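/- Let V = ℝ⁶ with standard basis e₁, …, e₆ and dual basis e₁*, …, e₆*. Fix real numbers c₂, d₁, d₂, d₃, and define the 1-form σ = e₄* + c₂·e₂* and the 2-form ψ = e₅* ∧ e₂* + e₆* ∧ e₃* on V. Let E = span{e₁, e₂ + d₁·e₄ + d₂·e₅ + d₃·e₆, e₃}, a 3-dimensional subspace of V. Then every 3-form on V of the shape β ∧ σ + α ∧ ψ, where β is an arbitrary 2-form and α is an arbitrary 1-form on V, vanishes on E if and only if d₁ = −c₂ and d₃ = 0. -/

import Mathlib

/-- The wedge product of two real-valued alternating forms, as the usual exterior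
product of alternating forms. -/
noncomputable def wedge {V : Type*} [AddCommGroup V] [Module ℝ V] {m l : ℕ}
    (η : V [⋀^Fin m]→ₗ[ℝ] ℝ) (θ : V [⋀^Fin l]→ₗ[ℝ] ℝ) : V [⋀^Fin (m + l)]→ₗ[ℝ] ℝ :=
  ((TensorProduct.lid ℝ ℝ).toLinearMap.compAlternatingMap (η.domCoprod θ)).domDomCongr
    finSumFinEquiv

/-- A form vanishes on a subspace `E` if it is zero on every tuple of vectors of `E`. -/
def VanishesOn {V : Type*} [AddCommGroup V] [Module ℝ V] {ι : Type*}
    (θ : V [⋀^ι]→ₗ[ℝ] ℝ) (E : Submodule ℝ V) : Prop :=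
  ∀ v : ι → V, (∀ i, v i ∈ E) → θ v = 0


/-- A linear functional regarded as an alternating `1`-form. -/
noncomputable def oneForm {V : Type*} [AddCommGroup V] [Module ℝ V]
    (f : V →ₗ[ℝ] ℝ) : V [⋀^Fin 1]→ₗ[ℝ] ℝ :=
  AlternatingMap.ofSubsingleton ℝ V ℝ 0 f

/-- The 1-form `σ = e₄* + c₂·e₂*` on `ℝ⁶`. -/
noncomputable def sigma9 (c₂ : ℝ) : (Fin 6 → ℝ) [⋀^Fin 1]→ₗ[ℝ] ℝ :=
  oneForm (LinearMap.proj 3 + c₂ • LinearMap.proj 1)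

/-- The 2-form `ψ = e₅* ∧ e₂* + e₆* ∧ e₃*` on `ℝ⁶`. -/
noncomputable def psi9 : (Fin 6 → ℝ) [⋀^Fin 2]→ₗ[ℝ] ℝ :=
  wedge (oneForm (LinearMap.proj 4)) (oneForm (LinearMap.proj 1)) +
    wedge (oneForm (LinearMap.proj 5)) (oneForm (LinearMap.proj 2))

/-- The standard basis vector `eᵢ` of `ℝ⁶`. -/
def stdBasis6 (i : Fin 6) : Fin 6 → ℝ := Pi.single i 1

/-- The subspace `E = span {e₁, e₂ + d₁·e₄ + d₂·e₅ + d₃·e₆, e₃}` of `ℝ⁶`. -/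
def E9 (d₁ d₂ d₃ : ℝ) : Submodule ℝ (Fin 6 → ℝ) :=
  Submodule.span ℝ
    {stdBasis6 0,
      stdBasis6 1 + d₁ • stdBasis6 3 + d₂ • stdBasis6 4 + d₃ • stdBasis6 5,
      stdBasis6 2}

set_option synthInstance.maxHeartbeats 1000000 in
open Equiv in
theorem wedge_apply_nsmul {V : Type*} [AddCommGroup V] [Module ℝ V] {m l : ℕ}
    (η : V [⋀^Fin m]→ₗ[ℝ] ℝ) (θ : V [⋀^Fin l]→ₗ[ℝ] ℝ) (u : Fin (m + l) → V) :
    (m.factorial * l.factorial) • wedge η θ u =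
      ∑ σ : Perm (Fin m ⊕ Fin l), Perm.sign σ •
        (η (fun i => u (finSumFinEquiv (σ (Sum.inl i)))) *
         θ (fun i => u (finSumFinEquiv (σ (Sum.inr i))))) := by
  have h0 : wedge η θ u = (TensorProduct.lid ℝ ℝ).toLinearMap
      ((η.domCoprod θ) (fun p => u (finSumFinEquiv p))) := rfl
  have h1 := DFunLike.congr_fun (MultilinearMap.domCoprod_alternization_eq η θ)
      (fun p => u (finSumFinEquiv p))
  rw [MultilinearMap.alternatization_apply, AlternatingMap.smul_apply] at h1
  have h2 := congrArg (TensorProduct.lid ℝ ℝ).toLinearMap h1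
  rw [map_sum, map_nsmul] at h2
  simp only [Fintype.card_fin] at h2
  rw [h0, ← h2]
  congr 1
  ext σ
  rw [Units.smul_def, map_zsmul, MultilinearMap.domDomCongr_apply,
    MultilinearMap.domCoprod_apply, LinearEquiv.coe_coe, TensorProduct.lid_tmul, smul_eq_mul,
    Units.smul_def, zsmul_eq_mul]
  norm_num [Function.comp]
  try ring

open Equiv

noncomputable def pl21 : Fin 6 → Perm (Fin 2 ⊕ Fin 1) :=
  ![1, Equiv.swap (.inl 0) (.inl 1), Equiv.swap (.inl 0) (.inr 0),
    Equiv.swap (.inl 1) (.inr 0),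
    Equiv.swap (.inl 0) (.inl 1) * Equiv.swap (.inl 1) (.inr 0),
    Equiv.swap (.inl 1) (.inr 0) * Equiv.swap (.inl 0) (.inl 1)]

noncomputable def pl12 : Fin 6 → Perm (Fin 1 ⊕ Fin 2) :=
  ![1, Equiv.swap (.inl 0) (.inr 0), Equiv.swap (.inl 0) (.inr 1),
    Equiv.swap (.inr 0) (.inr 1),
    Equiv.swap (.inl 0) (.inr 0) * Equiv.swap (.inr 0) (.inr 1),
    Equiv.swap (.inr 0) (.inr 1) * Equiv.swap (.inl 0) (.inr 0)]

noncomputable def pl11 : Fin 2 → Perm (Fin 1 ⊕ Fin 1) :=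
  ![1, Equiv.swap (.inl 0) (.inr 0)]

variable {V : Type*} [AddCommGroup V] [Module ℝ V]

theorem swap_arg (η : V [⋀^Fin 2]→ₗ[ℝ] ℝ) (x y : V) : η ![y, x] = - η ![x, y] := by
  have h := η.map_swap ![x, y] (i := 0) (j := 1) (by decide)
  rw [← h]; congr 1; funext j; fin_cases j <;> simp [Equiv.swap_apply_def]

theorem wedge21_apply (η : V [⋀^Fin 2]→ₗ[ℝ] ℝ) (θ : V [⋀^Fin 1]→ₗ[ℝ] ℝ) (u : Fin 3 → V) :
    wedge η θ u = η ![u 0, u 1] * θ ![u 2] - η ![u 0, u 2] * θ ![u 1]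
      + η ![u 1, u 2] * θ ![u 0] := by
  have h := wedge_apply_nsmul η θ u
  rw [← Fintype.sum_bijective pl21 (by decide) _ _ (fun i => rfl)] at h
  rw [Fin.sum_univ_six] at h
  have e0a : (fun j : Fin 2 => u (finSumFinEquiv ((pl21 0) (Sum.inl j)))) = ![u 0, u 1] := by
    funext j; fin_cases j <;> simp [pl21] <;> congr 1 <;> decide
  have e1a : (fun j : Fin 2 => u (finSumFinEquiv ((pl21 1) (Sum.inl j)))) = ![u 1, u 0] := by
    funext j; fin_cases j <;> simp [pl21] <;> congr 1 <;> decide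
  have e2a : (fun j : Fin 2 => u (finSumFinEquiv ((pl21 2) (Sum.inl j)))) = ![u 2, u 1] := by
    funext j; fin_cases j <;> simp [pl21] <;> congr 1 <;> decide
  have e3a : (fun j : Fin 2 => u (finSumFinEquiv ((pl21 3) (Sum.inl j)))) = ![u 0, u 2] := by
    funext j; fin_cases j <;> simp [pl21] <;> congr 1 <;> decide
  have e4a : (fun j : Fin 2 => u (finSumFinEquiv ((pl21 4) (Sum.inl j)))) = ![u 1, u 2] := by
    funext j; fin_cases j <;> simp [pl21] <;> congr 1 <;> decide
  have e5a : (fun j : Fin 2 => u (finSumFinEquiv ((pl21 5) (Sum.inl j)))) = ![u 2, u 0] := by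
    funext j; fin_cases j <;> simp [pl21] <;> congr 1 <;> decide
  have e0b : (fun j : Fin 1 => u (finSumFinEquiv ((pl21 0) (Sum.inr j)))) = ![u 2] := by
    funext j; fin_cases j <;> simp [pl21] <;> congr 1 <;> decide
  have e1b : (fun j : Fin 1 => u (finSumFinEquiv ((pl21 1) (Sum.inr j)))) = ![u 2] := by
    funext j; fin_cases j <;> simp [pl21] <;> congr 1 <;> decide
  have e2b : (fun j : Fin 1 => u (finSumFinEquiv ((pl21 2) (Sum.inr j)))) = ![u 0] := by
    funext j; fin_cases j <;> simp [pl21] <;> congr 1 <;> decide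
  have e3b : (fun j : Fin 1 => u (finSumFinEquiv ((pl21 3) (Sum.inr j)))) = ![u 1] := by
    funext j; fin_cases j <;> simp [pl21] <;> congr 1 <;> decide
  have e4b : (fun j : Fin 1 => u (finSumFinEquiv ((pl21 4) (Sum.inr j)))) = ![u 0] := by
    funext j; fin_cases j <;> simp [pl21] <;> congr 1 <;> decide
  have e5b : (fun j : Fin 1 => u (finSumFinEquiv ((pl21 5) (Sum.inr j)))) = ![u 1] := by
    funext j; fin_cases j <;> simp [pl21] <;> congr 1 <;> decide
  rw [e0a, e1a, e2a, e3a, e4a, e5a, e0b, e1b, e2b, e3b, e4b, e5b] at h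
  rw [show Perm.sign (pl21 0) = 1 from by decide, show Perm.sign (pl21 1) = -1 from by decide,
    show Perm.sign (pl21 2) = -1 from by decide, show Perm.sign (pl21 3) = -1 from by decide,
    show Perm.sign (pl21 4) = 1 from by decide, show Perm.sign (pl21 5) = 1 from by decide] at h
  rw [swap_arg η (u 0) (u 1), swap_arg η (u 1) (u 2), swap_arg η (u 0) (u 2)] at h
  norm_num [Units.smul_def] at h
  linarith [h]

theorem wedge12_apply (α : V [⋀^Fin 1]→ₗ[ℝ] ℝ) (ψ : V [⋀^Fin 2]→ₗ[ℝ] ℝ) (u : Fin 3 → V) :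
    wedge α ψ u = α ![u 0] * ψ ![u 1, u 2] - α ![u 1] * ψ ![u 0, u 2]
      + α ![u 2] * ψ ![u 0, u 1] := by
  have h := wedge_apply_nsmul α ψ u
  rw [← Fintype.sum_bijective pl12 (by decide) _ _ (fun i => rfl)] at h
  rw [Fin.sum_univ_six] at h
  have e0a : (fun j : Fin 1 => u (finSumFinEquiv ((pl12 0) (Sum.inl j)))) = ![u 0] := by
    funext j; fin_cases j <;> simp [pl12] <;> congr 1 <;> decide
  have e1a : (fun j : Fin 1 => u (finSumFinEquiv ((pl12 1) (Sum.inl j)))) = ![u 1] := by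
    funext j; fin_cases j <;> simp [pl12] <;> congr 1 <;> decide
  have e2a : (fun j : Fin 1 => u (finSumFinEquiv ((pl12 2) (Sum.inl j)))) = ![u 2] := by
    funext j; fin_cases j <;> simp [pl12] <;> congr 1 <;> decide
  have e3a : (fun j : Fin 1 => u (finSumFinEquiv ((pl12 3) (Sum.inl j)))) = ![u 0] := by
    funext j; fin_cases j <;> simp [pl12] <;> congr 1 <;> decide
  have e4a : (fun j : Fin 1 => u (finSumFinEquiv ((pl12 4) (Sum.inl j)))) = ![u 1] := by
    funext j; fin_cases j <;> simp [pl12] <;> congr 1 <;> decide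
  have e5a : (fun j : Fin 1 => u (finSumFinEquiv ((pl12 5) (Sum.inl j)))) = ![u 2] := by
    funext j; fin_cases j <;> simp [pl12] <;> congr 1 <;> decide
  have e0b : (fun j : Fin 2 => u (finSumFinEquiv ((pl12 0) (Sum.inr j)))) = ![u 1, u 2] := by
    funext j; fin_cases j <;> simp [pl12] <;> congr 1 <;> decide
  have e1b : (fun j : Fin 2 => u (finSumFinEquiv ((pl12 1) (Sum.inr j)))) = ![u 0, u 2] := by
    funext j; fin_cases j <;> simp [pl12] <;> congr 1 <;> decide
  have e2b : (fun j : Fin 2 => u (finSumFinEquiv ((pl12 2) (Sum.inr j)))) = ![u 1, u 0] := by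
    funext j; fin_cases j <;> simp [pl12] <;> congr 1 <;> decide
  have e3b : (fun j : Fin 2 => u (finSumFinEquiv ((pl12 3) (Sum.inr j)))) = ![u 2, u 1] := by
    funext j; fin_cases j <;> simp [pl12] <;> congr 1 <;> decide
  have e4b : (fun j : Fin 2 => u (finSumFinEquiv ((pl12 4) (Sum.inr j)))) = ![u 2, u 0] := by
    funext j; fin_cases j <;> simp [pl12] <;> congr 1 <;> decide
  have e5b : (fun j : Fin 2 => u (finSumFinEquiv ((pl12 5) (Sum.inr j)))) = ![u 0, u 1] := by
    funext j; fin_cases j <;> simp [pl12] <;> congr 1 <;> decide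
  rw [e0a, e1a, e2a, e3a, e4a, e5a, e0b, e1b, e2b, e3b, e4b, e5b] at h
  rw [show Perm.sign (pl12 0) = 1 from by decide, show Perm.sign (pl12 1) = -1 from by decide,
    show Perm.sign (pl12 2) = -1 from by decide, show Perm.sign (pl12 3) = -1 from by decide,
    show Perm.sign (pl12 4) = 1 from by decide, show Perm.sign (pl12 5) = 1 from by decide] at h
  rw [swap_arg ψ (u 1) (u 2), swap_arg ψ (u 0) (u 2), swap_arg ψ (u 0) (u 1)] at h
  norm_num [Units.smul_def] at h
  linarith [h]

theorem wedge11_apply (f g : V [⋀^Fin 1]→ₗ[ℝ] ℝ) (u : Fin 2 → V) :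
    wedge f g u = f ![u 0] * g ![u 1] - f ![u 1] * g ![u 0] := by
  have h := wedge_apply_nsmul f g u
  rw [← Fintype.sum_bijective pl11 (by decide) _ _ (fun i => rfl)] at h
  rw [Fin.sum_univ_two] at h
  have e0a : (fun j : Fin 1 => u (finSumFinEquiv ((pl11 0) (Sum.inl j)))) = ![u 0] := by
    funext j; fin_cases j <;> simp [pl11] <;> congr 1 <;> decide
  have e1a : (fun j : Fin 1 => u (finSumFinEquiv ((pl11 1) (Sum.inl j)))) = ![u 1] := by
    funext j; fin_cases j <;> simp [pl11] <;> congr 1 <;> decide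
  have e0b : (fun j : Fin 1 => u (finSumFinEquiv ((pl11 0) (Sum.inr j)))) = ![u 1] := by
    funext j; fin_cases j <;> simp [pl11] <;> congr 1 <;> decide
  have e1b : (fun j : Fin 1 => u (finSumFinEquiv ((pl11 1) (Sum.inr j)))) = ![u 0] := by
    funext j; fin_cases j <;> simp [pl11] <;> congr 1 <;> decide
  rw [e0a, e1a, e0b, e1b] at h
  rw [show Perm.sign (pl11 0) = 1 from by decide,
    show Perm.sign (pl11 1) = -1 from by decide] at h
  norm_num [Units.smul_def] at h
  linarith [h]

/-- new auxiliary defs -/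
noncomputable def wv (d₁ d₂ d₃ : ℝ) : Fin 3 → (Fin 6 → ℝ) :=
  ![stdBasis6 0, stdBasis6 1 + d₁ • stdBasis6 3 + d₂ • stdBasis6 4 + d₃ • stdBasis6 5,
    stdBasis6 2]

theorem sigma9_apply (c₂ : ℝ) (x : Fin 6 → ℝ) : sigma9 c₂ ![x] = x 3 + c₂ * x 1 := by
  simp [sigma9, oneForm]

theorem psi9_apply (x y : Fin 6 → ℝ) :
    psi9 ![x, y] = x 4 * y 1 - y 4 * x 1 + (x 5 * y 2 - y 5 * x 2) := by
  rw [psi9, AlternatingMap.add_apply, wedge11_apply, wedge11_apply]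
  simp [oneForm]

theorem wv_li (d₁ d₂ d₃ : ℝ) : LinearIndependent ℝ (wv d₁ d₂ d₃) := by
  have hb := (Pi.basisFun ℝ (Fin 3)).linearIndependent
  have key : (⇑(LinearMap.funLeft ℝ ℝ (Fin.castAdd 3 : Fin 3 → Fin 6))) ∘ (wv d₁ d₂ d₃)
      = ⇑(Pi.basisFun ℝ (Fin 3)) := by
    funext j
    funext i
    fin_cases j <;> fin_cases i <;>
      simp [wv, stdBasis6, LinearMap.funLeft, Pi.basisFun_apply, Pi.single_apply,
        Fin.ext_iff, Fin.coe_castAdd] <;>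
      norm_num [Fin.ext_iff, show ((3:Fin 6):ℕ) = 3 from rfl, show ((4:Fin 6):ℕ) = 4 from rfl,
        show ((5:Fin 6):ℕ) = 5 from rfl]
  exact LinearIndependent.of_comp _ (key ▸ hb)

theorem E9_eq (d₁ d₂ d₃ : ℝ) :
    E9 d₁ d₂ d₃ = Submodule.span ℝ (Set.range (wv d₁ d₂ d₃)) := by
  unfold E9
  congr 1
  ext x
  simp only [Set.mem_range, Set.mem_insert_iff, Set.mem_singleton_iff]
  constructor
  · rintro (rfl | rfl | rfl)
    exacts [⟨0, by simp [wv]⟩, ⟨1, by simp [wv]⟩, ⟨2, by simp [wv]⟩]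
  · rintro ⟨i, rfl⟩
    fin_cases i <;> simp [wv]

theorem cv3 (a b c d e f : ℝ) : ![a,b,c,d,e,f] 3 = d := rfl
theorem cv4 (a b c d e f : ℝ) : ![a,b,c,d,e,f] 4 = e := rfl
theorem cv5 (a b c d e f : ℝ) : ![a,b,c,d,e,f] 5 = f := rfl
theorem cv0 (a b c d e f : ℝ) : ![a,b,c,d,e,f] 0 = a := rfl
theorem cv1 (a b c d e f : ℝ) : ![a,b,c,d,e,f] 1 = b := rfl
theorem cv2 (a b c d e f : ℝ) : ![a,b,c,d,e,f] 2 = c := rfl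

theorem wv0_eq (d₁ d₂ d₃ : ℝ) : wv d₁ d₂ d₃ 0 = ![1,0,0,0,0,0] := by
  funext k; fin_cases k <;> simp [wv, stdBasis6, Pi.single_apply, Matrix.vecHead, Matrix.vecTail, cv0, cv1, cv2, cv3, cv4, cv5] <;> norm_num [Fin.ext_iff]
theorem wv1_eq (d₁ d₂ d₃ : ℝ) : wv d₁ d₂ d₃ 1 = ![0,1,0,d₁,d₂,d₃] := by
  funext k; fin_cases k <;> simp [wv, stdBasis6, Pi.single_apply, Matrix.vecHead, Matrix.vecTail, cv0, cv1, cv2, cv3, cv4, cv5] <;> norm_num [Fin.ext_iff]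
theorem wv2_eq (d₁ d₂ d₃ : ℝ) : wv d₁ d₂ d₃ 2 = ![0,0,1,0,0,0] := by
  funext k; fin_cases k <;> simp [wv, stdBasis6, Pi.single_apply, Matrix.vecHead, Matrix.vecTail, cv0, cv1, cv2, cv3, cv4, cv5] <;> norm_num [Fin.ext_iff]


/-- Section 7 of the paper: `E` is a 3-dimensional subspace of `ℝ⁶`, and every `3`-form
of the shape `β ∧ σ + α ∧ ψ` vanishes on `E` iff `d₁ = −c₂` and `d₃ = 0`. -/
theorem integral_element_invariant_inverse_problem (c₂ d₁ d₂ d₃ : ℝ) :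
    Module.finrank ℝ (E9 d₁ d₂ d₃) = 3 ∧
    ((∀ (β : (Fin 6 → ℝ) [⋀^Fin 2]→ₗ[ℝ] ℝ) (α : (Fin 6 → ℝ) [⋀^Fin 1]→ₗ[ℝ] ℝ),
        VanishesOn (wedge β (sigma9 c₂) + wedge α psi9) (E9 d₁ d₂ d₃)) ↔
      (d₁ = -c₂ ∧ d₃ = 0)) := by
  have hli := wv_li d₁ d₂ d₃
  have hEeq := E9_eq d₁ d₂ d₃
  have hw0 := wv0_eq d₁ d₂ d₃
  have hw1 := wv1_eq d₁ d₂ d₃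
  have hw2 := wv2_eq d₁ d₂ d₃
  have hu : ∀ i, wv d₁ d₂ d₃ i ∈ E9 d₁ d₂ d₃ := fun i =>
    Submodule.subset_span (by fin_cases i <;> simp [wv])
  refine ⟨?_, ⟨fun h => ⟨?_, ?_⟩, fun hd => ?_⟩⟩
  · rw [hEeq, finrank_span_eq_card hli, Fintype.card_fin]
  · -- d₁ = -c₂
    have h1 := h (wedge (oneForm (LinearMap.proj 0)) (oneForm (LinearMap.proj 2))) 0
      (wv d₁ d₂ d₃) hu
    rw [AlternatingMap.add_apply, wedge21_apply, wedge12_apply, hw0, hw1, hw2] at h1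
    rw [sigma9_apply, sigma9_apply, sigma9_apply, wedge11_apply, wedge11_apply,
      wedge11_apply] at h1
    simp [oneForm, cv0, cv1, cv2, cv3, cv4, cv5] at h1
    linarith
  · -- d₃ = 0
    have h2 := h 0 (oneForm (LinearMap.proj 0)) (wv d₁ d₂ d₃) hu
    rw [AlternatingMap.add_apply, wedge21_apply, wedge12_apply, hw0, hw1, hw2] at h2
    rw [psi9_apply, psi9_apply, psi9_apply] at h2
    simp [oneForm, cv0, cv1, cv2, cv3, cv4, cv5] at h2
    linarith
  · -- backward
    obtain ⟨hd1, hd3⟩ := hd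
    intro β α v hv
    rw [hEeq] at hv
    set S := Submodule.span ℝ (Set.range (wv d₁ d₂ d₃)) with hS
    set F := wedge β (sigma9 c₂) + wedge α psi9 with hF
    have hFu : F (wv d₁ d₂ d₃) = 0 := by
      rw [hF, AlternatingMap.add_apply, wedge21_apply, wedge12_apply, hw0, hw1, hw2]
      rw [sigma9_apply, sigma9_apply, sigma9_apply, psi9_apply, psi9_apply, psi9_apply]
      rw [hd1, hd3]
      norm_num [cv0, cv1, cv2, cv3, cv4, cv5]
      try ring
    let b : Module.Basis (Fin 3) ℝ S := Module.Basis.span hli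
    have key : F v = (F.compLinearMap S.subtype) (fun i => ⟨v i, hv i⟩) := rfl
    rw [key, AlternatingMap.eq_smul_basis_det b (F.compLinearMap S.subtype),
      AlternatingMap.smul_apply]
    have hbu : (F.compLinearMap S.subtype) ⇑b = F (wv d₁ d₂ d₃) := by
      have : (fun i => S.subtype (b i)) = wv d₁ d₂ d₃ :=
        funext fun i => congrArg Subtype.val (Module.Basis.span_apply hli i)
      rw [AlternatingMap.compLinearMap_apply, this]
    rw [hbu, hFu, zero_smul]
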